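/- arXiv:1303.4536 — 3 statements merged into one kernel-verified Lean document; each statement's English description precedes it below -/
import Mathlib

section
/- The map (r,c) ↦ F(r,c) is a bijection from {1,…,n} × {1,…,n} onto {1,2,…,n²}. -/
/-- Base array of the doubly-even construction: for `1 ≤ k ≤ n/2`,
if `k` is odd then `B r k = (k-1)n + r` and `B r (n+1-k) = 2p - kn + r`;
if `k` is even then `B r k = kn + 1 - r` and `B r (n+1-k) = 2p - (k-1)n + 1 - r`,
where `p = n²/2`. -/
def B (n r c : ℕ) : ℕ :=
  if c ≤ n / 2 then
    if Odd c then (c - 1) * n + r else c * n + 1 - r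
  else
    if Odd (n + 1 - c) then 2 * (n ^ 2 / 2) - (n + 1 - c) * n + r
    else 2 * (n ^ 2 / 2) - (n + 1 - c - 1) * n + 1 - r

/-- The set of rows to be swapped:
`S = {r : 1 ≤ r ≤ n, r even, r ≤ n/2} ∪ {r : 1 ≤ r ≤ n, r odd, n/2 < r ≤ n-1}`. -/
def S (n r : ℕ) : Prop :=
  1 ≤ r ∧ r ≤ n ∧ ((Even r ∧ r ≤ n / 2) ∨ (Odd r ∧ n / 2 < r ∧ r ≤ n - 1))

instance (n r : ℕ) : Decidable (S n r) := by unfold S; infer_instance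

/-- The final array: `F r c = B r (n+1-c)` if `r ∈ S`, and `F r c = B r c` otherwise. -/
def F (n r c : ℕ) : ℕ := if S n r then B n r (n + 1 - c) else B n r c

/-- Column parity predicate. -/
def Q (n c : ℕ) : Prop := if c ≤ n / 2 then Odd c else Odd (n + 1 - c)

instance (n c : ℕ) : Decidable (Q n c) := by unfold Q; infer_instance

lemma B_eq (n r c : ℕ) (h2 : n % 2 = 0) (hr1 : 1 ≤ r) (hrn : r ≤ n) (hc1 : 1 ≤ c)
    (hcn : c ≤ n) :
    B n r c = (c - 1) * n + (if Q n c then r else n + 1 - r) := by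
  have hdvd : 2 ∣ n ^ 2 := dvd_pow (by omega : (2:ℕ) ∣ n) (by norm_num)
  have hsq : 2 * (n ^ 2 / 2) = n ^ 2 := Nat.mul_div_cancel' hdvd
  unfold B Q
  by_cases hc2 : c ≤ n / 2
  · simp only [if_pos hc2]
    by_cases ho : Odd c
    · simp [ho]
    · simp only [if_neg ho]
      obtain ⟨c', rfl⟩ : ∃ c', c = c' + 1 := ⟨c - 1, by omega⟩
      rw [add_mul, one_mul]
      simp only [Nat.add_sub_cancel]
      generalize c' * n = X
      omega
  · simp only [if_neg hc2]
    have hk1 : 1 ≤ n + 1 - c := by omega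
    by_cases ho : Odd (n + 1 - c)
    · simp only [if_pos ho, hsq]
      have hck : c - 1 + (n + 1 - c) = n := by omega
      have hn2 : n ^ 2 = (c - 1) * n + (n + 1 - c) * n := by
        rw [← add_mul, hck, pow_two]
      rw [hn2]
      generalize (c - 1) * n = X
      omega
    · simp only [if_neg ho, hsq]
      have hck : c - 1 + 1 + (n + 1 - c - 1) = n := by omega
      have hn2 : n ^ 2 = (c - 1) * n + n + (n + 1 - c - 1) * n := by
        calc n ^ 2 = (c - 1 + 1 + (n + 1 - c - 1)) * n := by rw [hck, pow_two]
          _ = (c - 1) * n + 1 * n + (n + 1 - c - 1) * n := by rw [add_mul, add_mul]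
          _ = (c - 1) * n + n + (n + 1 - c - 1) * n := by rw [one_mul]
      rw [hn2]
      generalize (c - 1) * n = X
      generalize (n + 1 - c - 1) * n = Y
      omega

lemma F_eq (n r c : ℕ) (h2 : n % 2 = 0) (hr1 : 1 ≤ r) (hrn : r ≤ n) (hc1 : 1 ≤ c)
    (hcn : c ≤ n) :
    F n r c = ((if S n r then n + 1 - c else c) - 1) * n +
      (if Q n (if S n r then n + 1 - c else c) then r else n + 1 - r) := by
  unfold F
  by_cases hs : S n r
  · simp only [if_pos hs]
    exact B_eq n r (n + 1 - c) h2 hr1 hrn (by omega) (by omega)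
  · simp only [if_neg hs]
    exact B_eq n r c h2 hr1 hrn hc1 hcn

lemma block_inj {n a b s t : ℕ} (ha1 : 1 ≤ a) (hs1 : 1 ≤ s) (hsn : s ≤ n)
    (hb1 : 1 ≤ b) (ht1 : 1 ≤ t) (htn : t ≤ n)
    (h : (a - 1) * n + s = (b - 1) * n + t) : a = b ∧ s = t := by
  obtain ⟨a', rfl⟩ : ∃ a', a = a' + 1 := ⟨a - 1, by omega⟩
  obtain ⟨b', rfl⟩ : ∃ b', b = b' + 1 := ⟨b - 1, by omega⟩
  simp only [Nat.add_sub_cancel] at h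
  have hab : a' = b' := by
    rcases lt_trichotomy a' b' with hlt | heq | hgt
    · have h1 : (a' + 1) * n ≤ b' * n := Nat.mul_le_mul_right n (by omega)
      rw [add_mul, one_mul] at h1
      generalize a' * n = X at h h1
      generalize b' * n = Y at h h1
      omega
    · exact heq
    · have h1 : (b' + 1) * n ≤ a' * n := Nat.mul_le_mul_right n (by omega)
      rw [add_mul, one_mul] at h1
      generalize a' * n = X at h h1
      generalize b' * n = Y at h h1
      omega
  subst hab
  exact ⟨rfl, by omega⟩

lemma block_mem {n a s : ℕ} (ha1 : 1 ≤ a) (han : a ≤ n) (hs1 : 1 ≤ s) (hsn : s ≤ n) :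
    1 ≤ (a - 1) * n + s ∧ (a - 1) * n + s ≤ n ^ 2 := by
  constructor
  · exact le_trans hs1 (Nat.le_add_left _ _)
  · have h1 : (a - 1) * n + s ≤ (a - 1) * n + n := Nat.add_le_add_left hsn _
    have h2 : (a - 1) * n + n = a * n := by
      obtain ⟨a', rfl⟩ : ∃ a', a = a' + 1 := ⟨a - 1, by omega⟩
      simp [add_mul]
    have h3 : a * n ≤ n * n := Nat.mul_le_mul_right n han
    calc (a - 1) * n + s ≤ a * n := by omega
      _ ≤ n * n := h3
      _ = n ^ 2 := (pow_two n).symm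

/-- The map `(r,c) ↦ F r c` is a bijection from `{1,…,n} × {1,…,n}` onto `{1,…,n²}`. -/
theorem doubly_even_bijective (n : ℕ) (h4 : n % 4 = 0) (hn : 4 ≤ n) :
    Set.BijOn (fun rc : ℕ × ℕ => F n rc.1 rc.2)
      (Set.Icc 1 n ×ˢ Set.Icc 1 n) (Set.Icc 1 (n ^ 2)) := by
  have h2 : n % 2 = 0 := by omega
  have hn0 : 0 < n := by omega
  refine ⟨?_, ?_, ?_⟩
  · -- MapsTo
    rintro ⟨r, c⟩ ⟨⟨hr1, hrn⟩, ⟨hc1, hcn⟩⟩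
    simp only [Set.mem_Icc]
    rw [F_eq n r c h2 hr1 hrn hc1 hcn]
    set col := if S n r then n + 1 - c else c with hcol
    have hcol1 : 1 ≤ col := by rw [hcol]; split <;> omega
    have hcoln : col ≤ n := by rw [hcol]; split <;> omega
    have hs : 1 ≤ (if Q n col then r else n + 1 - r) ∧
        (if Q n col then r else n + 1 - r) ≤ n := by split <;> omega
    exact block_mem hcol1 hcoln hs.1 hs.2
  · -- InjOn
    rintro ⟨r, c⟩ ⟨⟨hr1, hrn⟩, ⟨hc1, hcn⟩⟩ ⟨r', c'⟩ ⟨⟨hr1', hrn'⟩, ⟨hc1', hcn'⟩⟩ heq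
    simp only at heq
    rw [F_eq n r c h2 hr1 hrn hc1 hcn, F_eq n r' c' h2 hr1' hrn' hc1' hcn'] at heq
    set col := if S n r then n + 1 - c else c with hcol
    set col' := if S n r' then n + 1 - c' else c' with hcol'
    have hcol1 : 1 ≤ col := by rw [hcol]; split <;> omega
    have hcoln : col ≤ n := by rw [hcol]; split <;> omega
    have hcol1' : 1 ≤ col' := by rw [hcol']; split <;> omega
    have hcoln' : col' ≤ n := by rw [hcol']; split <;> omega
    have hs : 1 ≤ (if Q n col then r else n + 1 - r) ∧
        (if Q n col then r else n + 1 - r) ≤ n := by split <;> omega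
    have hs' : 1 ≤ (if Q n col' then r' else n + 1 - r') ∧
        (if Q n col' then r' else n + 1 - r') ≤ n := by split <;> omega
    obtain ⟨hcc, hss⟩ := block_inj hcol1 hs.1 hs.2 hcol1' hs'.1 hs'.2 heq
    rw [← hcc] at hss
    have hrr : r = r' := by
      by_cases hq : Q n col
      · rwa [if_pos hq, if_pos hq] at hss
      · rw [if_neg hq, if_neg hq] at hss; omega
    subst hrr
    have hccc : c = c' := by
      rw [hcol, hcol'] at hcc
      by_cases hsr : S n r
      · rw [if_pos hsr, if_pos hsr] at hcc; omega
      · rwa [if_neg hsr, if_neg hsr] at hcc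
    exact Prod.ext rfl hccc
  · -- SurjOn
    rintro v ⟨hv1, hv2⟩
    obtain ⟨q, m0, hdm, hm0n⟩ : ∃ q m0, n * q + m0 = v - 1 ∧ m0 < n :=
      ⟨(v - 1) / n, (v - 1) % n, Nat.div_add_mod (v - 1) n, Nat.mod_lt _ hn0⟩
    have hqn : q < n := by
      by_contra hle
      push_neg at hle
      have h1 : n * n ≤ n * q := Nat.mul_le_mul_left n hle
      rw [pow_two] at hv2
      omega
    refine ⟨(if Q n (q + 1) then m0 + 1 else n + 1 - (m0 + 1),
      if S n (if Q n (q + 1) then m0 + 1 else n + 1 - (m0 + 1)) then n + 1 - (q + 1)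
        else q + 1), ⟨⟨?_, ?_⟩, ⟨?_, ?_⟩⟩, ?_⟩
    · split <;> omega
    · split <;> omega
    · split <;> split <;> omega
    · split <;> split <;> omega
    · set r := if Q n (q + 1) then m0 + 1 else n + 1 - (m0 + 1) with hr
      set c := if S n r then n + 1 - (q + 1) else q + 1 with hc
      have hr1 : 1 ≤ r := by rw [hr]; split <;> omega
      have hrn : r ≤ n := by rw [hr]; split <;> omega
      have hc1 : 1 ≤ c := by rw [hc]; split <;> omega
      have hcn : c ≤ n := by rw [hc]; split <;> omega
      simp only
      rw [F_eq n r c h2 hr1 hrn hc1 hcn]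
      have hcol : (if S n r then n + 1 - c else c) = q + 1 := by
        rw [hc]; by_cases hsr : S n r <;> simp [hsr] <;> omega
      rw [hcol]
      have hinner : (if Q n (q + 1) then r else n + 1 - r) = m0 + 1 := by
        rw [hr]; by_cases hq' : Q n (q + 1) <;> simp [hq'] <;> omega
      rw [hinner]
      simp only [Nat.add_sub_cancel]
      have : q * n = n * q := Nat.mul_comm q n
      rw [this]
      omega
end

section
/- For every row index r ∈ {1,…,n}, the row sum ∑_{c=1}^{n} F(r,c) equals n(n²+1)/2. -/
lemma refl_sum (n : ℕ) (f : ℕ → ℕ) :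
    ∑ c ∈ Finset.Icc 1 n, f (n + 1 - c) = ∑ c ∈ Finset.Icc 1 n, f c := by
  apply Finset.sum_nbij' (i := fun c => n + 1 - c) (j := fun c => n + 1 - c) <;>
    intro a ha <;> simp at ha ⊢ <;> omega

lemma refl_sum2 (n m : ℕ) (hm : m = n / 2) (hn : n % 2 = 0) (f : ℕ → ℕ) :
    ∑ c ∈ Finset.Icc (m+1) n, f c = ∑ k ∈ Finset.Icc 1 m, f (n + 1 - k) := by
  symm
  apply Finset.sum_nbij' (i := fun c => n + 1 - c) (j := fun c => n + 1 - c) <;>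
    intro a ha <;> simp at ha ⊢ <;> omega

lemma pairB (n r k m : ℕ) (hm : m = n / 2) (h4 : n % 4 = 0) (hn : 4 ≤ n)
    (hr1 : 1 ≤ r) (hr2 : r ≤ n) (hk1 : 1 ≤ k) (hk2 : k ≤ m) :
    B n r k + B n r (n + 1 - k) =
      if Odd k then 2 * (n ^ 2 / 2) - n + 2 * r else 2 * (n ^ 2 / 2) + n + 2 - 2 * r := by
  have hc1 : k ≤ n / 2 := by omega
  have hc2 : ¬ (n + 1 - k ≤ n / 2) := by omega
  have hc3 : n + 1 - (n + 1 - k) = k := by omega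
  have hP : 2 * (n ^ 2 / 2) = n * n := by
    rw [pow_two]
    have h2 : 2 ∣ n * n := Dvd.dvd.mul_right ⟨n/2, by omega⟩ n
    omega
  have hkn : k * n ≤ n ^ 2 / 2 := by
    have : k * n ≤ (n/2) * n := Nat.mul_le_mul_right n hc1
    have h2 : (n/2) * n * 2 = n * n := by
      have h0 : n / 2 * 2 = n := by omega
      calc (n/2) * n * 2 = (n/2 * 2) * n := by ring
        _ = n * n := by rw [h0]
    omega
  have hnk : n ≤ k * n := Nat.le_mul_of_pos_left n hk1
  have hsub : (k - 1) * n = k * n - n := by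
    rw [Nat.sub_mul, one_mul]
  simp only [B, if_pos hc1, if_neg hc2, hc3]
  rcases Nat.even_or_odd k with hk | hk
  · have hk' : ¬ Odd k := by simp [(Nat.not_odd_iff_even (n:=k)).mpr hk]
    rw [if_neg hk', if_neg hk', if_neg hk']
    have hk2n : 2 * n ≤ k * n := by
      have h2 : 2 ≤ k := by rcases hk with ⟨t, ht⟩; omega
      exact Nat.mul_le_mul_right n h2
    rw [hsub]
    generalize k * n = a at hkn hnk hk2n ⊢
    omega
  · rw [if_pos hk, if_pos hk, if_pos hk, hsub]
    generalize k * n = a at hkn hnk ⊢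
    omega

lemma pair_sum (q A C : ℕ) :
    ∑ k ∈ Finset.range (2*q), (if Odd (1 + k) then A else C) = q * (A + C) := by
  induction q with
  | zero => simp
  | succ q ih =>
    have h2 : 2*(q+1) = (2*q+1)+1 := by ring
    rw [h2, Finset.sum_range_succ, Finset.sum_range_succ, ih]
    have ho : Odd (1 + 2*q) := by rw [Nat.odd_iff]; omega
    have he : ¬ Odd (1 + (2*q+1)) := by rw [Nat.odd_iff]; omega
    rw [if_pos ho, if_neg he]
    ring

/-- Every row of `F` sums to `n(n²+1)/2`. -/
theorem doubly_even_row_sums (n : ℕ) (h4 : n % 4 = 0) (hn : 4 ≤ n) :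
    ∀ r ∈ Finset.Icc 1 n, ∑ c ∈ Finset.Icc 1 n, F n r c = n * (n ^ 2 + 1) / 2 := by
  intro r hr
  simp only [Finset.mem_Icc] at hr
  obtain ⟨q, hq⟩ : ∃ q, n = 4 * q := ⟨n/4, by omega⟩
  have hm : n / 2 = n / 2 := rfl
  have hsum : ∑ c ∈ Finset.Icc 1 n, F n r c = ∑ c ∈ Finset.Icc 1 n, B n r c := by
    by_cases hS : S n r
    · simp only [F, if_pos hS]; exact refl_sum n (B n r)
    · simp only [F, if_neg hS]
  rw [hsum]
  have hsplit : ∑ c ∈ Finset.Icc 1 n, B n r c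
      = ∑ k ∈ Finset.Icc 1 (n/2), (B n r k + B n r (n + 1 - k)) := by
    rw [Finset.sum_add_distrib]
    rw [← refl_sum2 n (n/2) rfl (by omega) (B n r)]
    have h1 : Finset.Icc 1 n = Finset.Ioc 0 n := by rw [← Finset.Icc_add_one_left_eq_Ioc, zero_add]
    have h2 : Finset.Icc 1 (n/2) = Finset.Ioc 0 (n/2) := by rw [← Finset.Icc_add_one_left_eq_Ioc, zero_add]
    have h3 : Finset.Icc (n/2+1) n = Finset.Ioc (n/2) n := by rw [← Finset.Icc_add_one_left_eq_Ioc]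
    rw [h1, h2, h3, Finset.sum_Ioc_consecutive _ (by omega) (by omega)]
  rw [hsplit]
  rw [Finset.sum_congr rfl (fun k hk => by
    simp only [Finset.mem_Icc] at hk
    exact pairB n r k (n/2) rfl h4 hn hr.1 hr.2 hk.1 hk.2)]
  rw [← Finset.Ico_add_one_right_eq_Icc, Finset.sum_Ico_eq_sum_range]
  have hm2 : n / 2 + 1 - 1 = 2 * q := by omega
  rw [hm2, pair_sum]
  have hP : 2 * (n ^ 2 / 2) = n * n := by
    rw [pow_two]
    have h2 : 2 ∣ n * n := Dvd.dvd.mul_right ⟨n/2, by omega⟩ n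
    omega
  have hAC : (2 * (n ^ 2 / 2) - n + 2 * r) + (2 * (n ^ 2 / 2) + n + 2 - 2 * r)
      = 2 * (n * n) + 2 := by
    have hnn : n ≤ n * n := Nat.le_mul_of_pos_left n (by omega)
    generalize n * n = a at hP hnn ⊢
    omega
  rw [hAC]
  subst hq
  have key : 4 * q * ((4 * q) ^ 2 + 1) = 2 * (q * (2 * (4 * q * (4 * q)) + 2)) := by ring
  rw [key, Nat.mul_div_cancel_left _ (by norm_num)]
end

section
/- For every column index c ∈ {1,…,n}, the column sum of the inner array satisfies ∑_{r=1}^{n−2} G(r,c) = (n/2 − 1)(n² + 1). -/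
/-- Base array of the singly-even construction on rows `1 ≤ r ≤ n-2`, columns `1 ≤ c ≤ n`:
for `1 ≤ k ≤ n/2 - 1`, if `k` is odd then `B' r k = (k-1)(n-2) + r` and
`B' r (n+1-k) = 2p - k(n-2) + r`; if `k` is even then `B' r k = k(n-2) + 1 - r` and
`B' r (n+1-k) = 2p - (k-1)(n-2) + 1 - r`; and for `k = m = n/2`,
`B' r m = (m-1)(n-2) + r` and `B' r (m+1) = 2p - (m-1)(n-2) + 1 - r`, where `p = n²/2`. -/
def B' (n r c : ℕ) : ℕ :=
  if c ≤ n / 2 - 1 then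
    if Odd c then (c - 1) * (n - 2) + r else c * (n - 2) + 1 - r
  else if c = n / 2 then (n / 2 - 1) * (n - 2) + r
  else if c = n / 2 + 1 then 2 * (n ^ 2 / 2) - (n / 2 - 1) * (n - 2) + 1 - r
  else
    if Odd (n + 1 - c) then 2 * (n ^ 2 / 2) - (n + 1 - c) * (n - 2) + r
    else 2 * (n ^ 2 / 2) - (n + 1 - c - 1) * (n - 2) + 1 - r

/-- The set of rows to be swapped:
`S' = {r : r even, r ≤ (n-2)/2} ∪ {r : r odd, (n-2)/2 < r ≤ n-3}`. -/
def S' (n r : ℕ) : Prop :=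
  (Even r ∧ r ≤ (n - 2) / 2) ∨ (Odd r ∧ (n - 2) / 2 < r ∧ r ≤ n - 3)

instance (n r : ℕ) : Decidable (S' n r) := by unfold S'; infer_instance

/-- The inner array: `G r c = B' r (n+1-c)` if `r ∈ S'`, and `G r c = B' r c` otherwise. -/
def G (n r c : ℕ) : ℕ := if S' n r then B' n r (n + 1 - c) else B' n r c

/-- The first row of the singly-even construction, with `p = n²/2` and `m = n/2`:
`R₁ 1 = p+1`, `R₁ n = p+2`, `R₁ (m+2) = p+n-m`, `R₁ (m+3) = p+n-m-1`;
for `2 ≤ j ≤ m+1`, `R₁ j = p-n+j-1` if `j` even and `R₁ j = p+n+2-j` if `j` odd;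
for `m+4 ≤ j ≤ n-1`, `R₁ j = p-n+j-1` if `j` odd and `R₁ j = p+n+2-j` if `j` even. -/
def R1 (n j : ℕ) : ℕ :=
  if j = 1 then n ^ 2 / 2 + 1
  else if j = n then n ^ 2 / 2 + 2
  else if j = n / 2 + 2 then n ^ 2 / 2 + n - n / 2
  else if j = n / 2 + 3 then n ^ 2 / 2 + n - n / 2 - 1
  else if j ≤ n / 2 + 1 then
    if Even j then n ^ 2 / 2 - n + j - 1 else n ^ 2 / 2 + n + 2 - j
  else
    if Odd j then n ^ 2 / 2 - n + j - 1 else n ^ 2 / 2 + n + 2 - j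

/-- The last row: `Rₙ j = n² + 1 - R₁ j`. -/
def Rn (n j : ℕ) : ℕ := n ^ 2 + 1 - R1 n j

/-- The complete singly-even array: first row `R₁`, last row `Rₙ`,
and `F' r c = G (r-1) c` for `2 ≤ r ≤ n-1`. -/
def F' (n r c : ℕ) : ℕ :=
  if r = 1 then R1 n c else if r = n then Rn n c else G n (r - 1) c


/- ## Auxiliary summation lemmas -/

lemma mysum_inc (f : ℕ → ℕ) (m C : ℕ) (h : ∀ r ∈ Finset.Ioc 0 m, f r = C + 2*r) :
    ∑ r ∈ Finset.Ioc 0 m, f r = m*C + m*(m+1) := by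
  induction m with
  | zero => simp
  | succ k ih =>
    rw [Finset.sum_Ioc_succ_top (Nat.zero_le _),
      ih (fun r hr => h r (by rw [Finset.mem_Ioc] at *; omega)),
      h (k+1) (by rw [Finset.mem_Ioc]; omega)]
    ring

lemma mysum_dec (f : ℕ → ℕ) (m : ℕ) : ∀ C, (∀ r ∈ Finset.Ioc 0 m, f r + 2*r = C + 2*(m+1)) →
    ∑ r ∈ Finset.Ioc 0 m, f r = m*C + m*(m+1) := by
  induction m with
  | zero => simp
  | succ k ih =>
    intro C h
    have hf : f (k+1) = C + 2 := by
      have := h (k+1) (by rw [Finset.mem_Ioc]; omega)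
      omega
    rw [Finset.sum_Ioc_succ_top (Nat.zero_le _),
      ih (C+2) (fun r hr => by
        have := h r (by rw [Finset.mem_Ioc] at *; omega)
        omega), hf]
    ring

lemma mysum_alt (f : ℕ → ℕ) (V D m s : ℕ) (hm : m = 2*s)
    (h : ∀ r ∈ Finset.Ioc 0 m, f r + 2*(r % 2)*D = V + D) :
    ∑ r ∈ Finset.Ioc 0 m, f r = m*V := by
  subst hm
  induction s with
  | zero => simp
  | succ k ih =>
    have h1 : f (2*k+1) + 2*D = V + D := by
      have := h (2*k+1) (by rw [Finset.mem_Ioc]; omega)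
      have e : (2*k+1) % 2 = 1 := by omega
      rw [e] at this
      omega
    have h2 : f (2*k+1+1) = V + D := by
      have := h (2*k+1+1) (by rw [Finset.mem_Ioc]; omega)
      have e : (2*k+1+1) % 2 = 0 := by omega
      rw [e] at this
      omega
    rw [show 2*(k+1) = (2*k+1)+1 by ring, Finset.sum_Ioc_succ_top (Nat.zero_le _),
      Finset.sum_Ioc_succ_top (Nat.zero_le _),
      ih (fun r hr => h r (by rw [Finset.mem_Ioc] at *; omega))]
    have hkV : ((2*k+1)+1)*V = 2*k*V + 2*V := by ring
    omega

lemma mysum_alt' (f : ℕ → ℕ) (V D m s : ℕ) (hm : m = 2*s)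
    (h : ∀ r ∈ Finset.Ioc 0 m, f r + 2*((r+1) % 2)*D = V + D) :
    ∑ r ∈ Finset.Ioc 0 m, f r = m*V := by
  subst hm
  induction s with
  | zero => simp
  | succ k ih =>
    have h1 : f (2*k+1) = V + D := by
      have := h (2*k+1) (by rw [Finset.mem_Ioc]; omega)
      have e : (2*k+1+1) % 2 = 0 := by omega
      rw [e] at this
      omega
    have h2 : f (2*k+1+1) + 2*D = V + D := by
      have := h (2*k+1+1) (by rw [Finset.mem_Ioc]; omega)
      have e : (2*k+1+1+1) % 2 = 1 := by omega
      rw [e] at this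
      omega
    rw [show 2*(k+1) = (2*k+1)+1 by ring, Finset.sum_Ioc_succ_top (Nat.zero_le _),
      Finset.sum_Ioc_succ_top (Nat.zero_le _),
      ih (fun r hr => h r (by rw [Finset.mem_Ioc] at *; omega))]
    have hkV : ((2*k+1)+1)*V = 2*k*V + 2*V := by ring
    omega

lemma myshift_sum (k m : ℕ) (f : ℕ → ℕ) :
    ∑ r ∈ Finset.Ioc k (k+m), f r = ∑ r ∈ Finset.Ioc 0 m, f (k+r) := by
  induction m with
  | zero => simp
  | succ t ih =>
    rw [show k+(t+1) = (k+t)+1 by omega, Finset.sum_Ioc_succ_top (by omega),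
      Finset.sum_Ioc_succ_top (Nat.zero_le _), ih, Nat.add_assoc]

/- ## Value lemmas for `B'` with `n = 4a+6` -/

lemma Blo_odd (a r c : ℕ) (hc1 : c % 2 = 1) (hc2 : c ≤ 2*a+2) :
    B' (4*a+6) r c + (4*a+4) = c*(4*a+4) + r := by
  unfold B'
  rw [if_pos (show c ≤ (4*a+6)/2 - 1 by omega), if_pos (Nat.odd_iff.mpr hc1)]
  rw [show (4:ℕ)*a+6-2 = 4*a+4 by omega, Nat.sub_one_mul]
  have h3 : 4*a+4 ≤ c*(4*a+4) := Nat.le_mul_of_pos_left _ (by omega)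
  omega

lemma Blo_even (a r c : ℕ) (hc0 : c % 2 = 0) (hc1 : 1 ≤ c) (hc2 : c ≤ 2*a+2)
    (hr : r ≤ 4*a+4) :
    B' (4*a+6) r c + r = c*(4*a+4) + 1 := by
  unfold B'
  rw [if_pos (show c ≤ (4*a+6)/2 - 1 by omega),
    if_neg (show ¬ Odd c by rw [Nat.odd_iff]; omega)]
  rw [show (4:ℕ)*a+6-2 = 4*a+4 by omega]
  have h3 : 2*(4*a+4) ≤ c*(4*a+4) := mul_le_mul_left (by omega) _
  omega

lemma Bmid (a r : ℕ) :
    B' (4*a+6) r (2*a+3) = 8*a^2+16*a+8 + r := by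
  unfold B'
  rw [if_neg (by omega), if_pos (show 2*a+3 = (4*a+6)/2 by omega)]
  rw [show (4*a+6)/2 - 1 = 2*a+2 by omega, show (4:ℕ)*a+6-2 = 4*a+4 by omega,
    show (2*a+2)*(4*a+4) = 8*a^2+16*a+8 by ring]

lemma Bmid1 (a r : ℕ) (hr : r ≤ 4*a+4) :
    B' (4*a+6) r (2*a+4) + r = 8*a^2+32*a+29 := by
  unfold B'
  rw [if_neg (by omega), if_neg (by omega), if_pos (show 2*a+4 = (4*a+6)/2 + 1 by omega)]
  have hp : (4*a+6)^2/2 = 8*a^2+24*a+18 := by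
    have h : (4*a+6)^2 = 16*a^2+48*a+36 := by ring
    omega
  rw [hp, show (4*a+6)/2 - 1 = 2*a+2 by omega, show (4:ℕ)*a+6-2 = 4*a+4 by omega,
    show (2*a+2)*(4*a+4) = 8*a^2+16*a+8 by ring]
  omega

lemma Bhi_odd (a r e : ℕ) (he1 : e % 2 = 1) (he2 : e ≤ 2*a+2) :
    B' (4*a+6) r (4*a+7-e) + e*(4*a+4) = 16*a^2+48*a+36 + r := by
  unfold B'
  rw [if_neg (by omega), if_neg (by omega), if_neg (by omega)]
  simp only [show 4*a+6+1-(4*a+7-e) = e by omega]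
  rw [if_pos (Nat.odd_iff.mpr he1)]
  have hp : (4*a+6)^2/2 = 8*a^2+24*a+18 := by
    have h : (4*a+6)^2 = 16*a^2+48*a+36 := by ring
    omega
  rw [hp, show (4:ℕ)*a+6-2 = 4*a+4 by omega]
  have h5 : e*(4*a+4) ≤ 8*a^2+16*a+8 := by
    have h6 := mul_le_mul_left he2 (4*a+4)
    have h7 : (2*a+2)*(4*a+4) = 8*a^2+16*a+8 := by ring
    omega
  omega

lemma Bhi_even (a r e : ℕ) (he0 : e % 2 = 0) (he1 : 1 ≤ e) (he2 : e ≤ 2*a+2)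
    (hr : r ≤ 4*a+4) :
    B' (4*a+6) r (4*a+7-e) + (e*(4*a+4) + r) = 16*a^2+52*a+41 := by
  unfold B'
  rw [if_neg (by omega), if_neg (by omega), if_neg (by omega)]
  simp only [show 4*a+6+1-(4*a+7-e) = e by omega]
  rw [if_neg (show ¬ Odd e by rw [Nat.odd_iff]; omega)]
  have hp : (4*a+6)^2/2 = 8*a^2+24*a+18 := by
    have h : (4*a+6)^2 = 16*a^2+48*a+36 := by ring
    omega
  rw [hp, show (4:ℕ)*a+6-2 = 4*a+4 by omega, Nat.sub_one_mul]
  have h5 : e*(4*a+4) ≤ 8*a^2+16*a+8 := by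
    have h6 := mul_le_mul_left he2 (4*a+4)
    have h7 : (2*a+2)*(4*a+4) = 8*a^2+16*a+8 := by ring
    omega
  have h3 : 2*(4*a+4) ≤ e*(4*a+4) := mul_le_mul_left (by omega) _
  omega

lemma S'_iff_low (a r : ℕ) (h1 : 1 ≤ r) (h2 : r ≤ 2*a+2) :
    S' (4*a+6) r ↔ r % 2 = 0 := by
  simp only [S', Nat.even_iff, Nat.odd_iff]
  omega

lemma S'_iff_high (a r : ℕ) (h1 : 1 ≤ r) (h2 : r ≤ 2*a+2) :
    S' (4*a+6) (2*a+2+r) ↔ r % 2 = 1 := by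
  simp only [S', Nat.even_iff, Nat.odd_iff]
  omega

/-- Every column of the inner array `G` sums to `(n/2 - 1)(n² + 1)`. -/
theorem singly_even_inner_column_sums (n : ℕ) (h2 : n % 4 = 2) (hn : 6 ≤ n) :
    ∀ c ∈ Finset.Icc 1 n,
      ∑ r ∈ Finset.Icc 1 (n - 2), G n r c = (n / 2 - 1) * (n ^ 2 + 1) := by
  obtain ⟨a, rfl⟩ : ∃ a, n = 4*a+6 := ⟨(n-6)/4, by omega⟩
  intro c hc
  rw [Finset.mem_Icc] at hc
  rw [show (4:ℕ)*a+6-2 = 4*a+4 by omega]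
  have hsplit : ∑ r ∈ Finset.Icc 1 (4*a+4), G (4*a+6) r c
      = ∑ r ∈ Finset.Ioc 0 (2*a+2), (G (4*a+6) r c + G (4*a+6) (2*a+2+r) c) := by
    have e1 : Finset.Icc 1 (4*a+4) = Finset.Ioc 0 (4*a+4) := by
      ext x
      simp only [Finset.mem_Icc, Finset.mem_Ioc]
      omega
    rw [e1, ← Finset.sum_Ioc_consecutive _ (Nat.zero_le (2*a+2)) (show 2*a+2 ≤ 4*a+4 by omega),
      show (4:ℕ)*a+4 = (2*a+2) + (2*a+2) by ring, myshift_sum, ← Finset.sum_add_distrib]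
  rw [hsplit, show ((4*a+6)/2 - 1) * ((4*a+6)^2+1) = (2*a+2) * (16*a^2+48*a+37) by
    rw [show (4*a+6)/2 - 1 = 2*a+2 by omega, show ((4:ℕ)*a+6)^2 = 16*a^2+48*a+36 by ring]]
  by_cases h1 : c ≤ 2*a+2
  · rcases Nat.mod_two_eq_zero_or_one c with hpar | hpar
    · -- c even, low: decreasing case
      have key : ∀ r ∈ Finset.Ioc 0 (2*a+2),
          (G (4*a+6) r c + G (4*a+6) (2*a+2+r) c) + 2*r
            = (16*a^2+46*a+34) + 2*((2*a+2)+1) := by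
        intro r hr
        rw [Finset.mem_Ioc] at hr
        unfold G
        rw [show (4:ℕ)*a+6+1-c = 4*a+7-c by omega]
        rcases Nat.mod_two_eq_zero_or_one r with hr2 | hr2
        · rw [if_pos ((S'_iff_low a r (by omega) (by omega)).mpr hr2),
            if_neg (by rw [S'_iff_high a r (by omega) (by omega)]; omega)]
          have e1 := Bhi_even a r c hpar (by omega) (by omega) (by omega)
          have e2 := Blo_even a (2*a+2+r) c hpar (by omega) (by omega) (by omega)
          omega
        · rw [if_neg (by rw [S'_iff_low a r (by omega) (by omega)]; omega),
            if_pos ((S'_iff_high a r (by omega) (by omega)).mpr hr2)]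
          have e1 := Blo_even a r c hpar (by omega) (by omega) (by omega)
          have e2 := Bhi_even a (2*a+2+r) c hpar (by omega) (by omega) (by omega)
          omega
      rw [mysum_dec _ _ _ key]
      ring
    · -- c odd, low: increasing case
      have key : ∀ r ∈ Finset.Ioc 0 (2*a+2),
          (G (4*a+6) r c + G (4*a+6) (2*a+2+r) c) = (16*a^2+46*a+34) + 2*r := by
        intro r hr
        rw [Finset.mem_Ioc] at hr
        unfold G
        rw [show (4:ℕ)*a+6+1-c = 4*a+7-c by omega]
        rcases Nat.mod_two_eq_zero_or_one r with hr2 | hr2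
        · rw [if_pos ((S'_iff_low a r (by omega) (by omega)).mpr hr2),
            if_neg (by rw [S'_iff_high a r (by omega) (by omega)]; omega)]
          have e1 := Bhi_odd a r c hpar (by omega)
          have e2 := Blo_odd a (2*a+2+r) c hpar (by omega)
          omega
        · rw [if_neg (by rw [S'_iff_low a r (by omega) (by omega)]; omega),
            if_pos ((S'_iff_high a r (by omega) (by omega)).mpr hr2)]
          have e1 := Blo_odd a r c hpar (by omega)
          have e2 := Bhi_odd a (2*a+2+r) c hpar (by omega)
          omega
      rw [mysum_inc _ _ _ key]
      ring
  · by_cases hc3 : c = 2*a+3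
    · subst hc3
      have key : ∀ r ∈ Finset.Ioc 0 (2*a+2),
          (G (4*a+6) r (2*a+3) + G (4*a+6) (2*a+2+r) (2*a+3)) + 2*(r % 2)*(2*a+2)
            = (16*a^2+48*a+37) + (2*a+2) := by
        intro r hr
        rw [Finset.mem_Ioc] at hr
        unfold G
        rw [show (4:ℕ)*a+6+1-(2*a+3) = 2*a+4 by omega]
        rcases Nat.mod_two_eq_zero_or_one r with hr2 | hr2
        · rw [if_pos ((S'_iff_low a r (by omega) (by omega)).mpr hr2),
            if_neg (by rw [S'_iff_high a r (by omega) (by omega)]; omega), hr2]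
          have e1 := Bmid1 a r (by omega)
          have e2 := Bmid a (2*a+2+r)
          omega
        · rw [if_neg (by rw [S'_iff_low a r (by omega) (by omega)]; omega),
            if_pos ((S'_iff_high a r (by omega) (by omega)).mpr hr2), hr2]
          have e1 := Bmid a r
          have e2 := Bmid1 a (2*a+2+r) (by omega)
          omega
      rw [mysum_alt _ _ _ _ (a+1) (by ring) key]
    · by_cases hc4 : c = 2*a+4
      · subst hc4
        have key : ∀ r ∈ Finset.Ioc 0 (2*a+2),
            (G (4*a+6) r (2*a+4) + G (4*a+6) (2*a+2+r) (2*a+4)) + 2*((r+1) % 2)*(2*a+2)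
              = (16*a^2+48*a+37) + (2*a+2) := by
          intro r hr
          rw [Finset.mem_Ioc] at hr
          unfold G
          rw [show (4:ℕ)*a+6+1-(2*a+4) = 2*a+3 by omega]
          rcases Nat.mod_two_eq_zero_or_one r with hr2 | hr2
          · rw [if_pos ((S'_iff_low a r (by omega) (by omega)).mpr hr2),
              if_neg (by rw [S'_iff_high a r (by omega) (by omega)]; omega),
              show (r+1) % 2 = 1 by omega]
            have e1 := Bmid a r
            have e2 := Bmid1 a (2*a+2+r) (by omega)
            omega
          · rw [if_neg (by rw [S'_iff_low a r (by omega) (by omega)]; omega),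
              if_pos ((S'_iff_high a r (by omega) (by omega)).mpr hr2),
              show (r+1) % 2 = 0 by omega]
            have e1 := Bmid1 a r (by omega)
            have e2 := Bmid a (2*a+2+r)
            omega
        rw [mysum_alt' _ _ _ _ (a+1) (by ring) key]
      · -- c ≥ 2a+5 : high columns
        obtain ⟨e, he1, he2, rfl⟩ : ∃ e, 1 ≤ e ∧ e ≤ 2*a+2 ∧ c = 4*a+7-e :=
          ⟨4*a+7-c, by omega, by omega, by omega⟩
        rcases Nat.mod_two_eq_zero_or_one e with hpar | hpar
        · -- e even: decreasing
          have key : ∀ r ∈ Finset.Ioc 0 (2*a+2),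
              (G (4*a+6) r (4*a+7-e) + G (4*a+6) (2*a+2+r) (4*a+7-e)) + 2*r
                = (16*a^2+46*a+34) + 2*((2*a+2)+1) := by
            intro r hr
            rw [Finset.mem_Ioc] at hr
            unfold G
            rw [show (4:ℕ)*a+6+1-(4*a+7-e) = e by omega]
            rcases Nat.mod_two_eq_zero_or_one r with hr2 | hr2
            · rw [if_pos ((S'_iff_low a r (by omega) (by omega)).mpr hr2),
                if_neg (by rw [S'_iff_high a r (by omega) (by omega)]; omega)]
              have e1 := Blo_even a r e hpar (by omega) (by omega) (by omega)
              have e2 := Bhi_even a (2*a+2+r) e hpar (by omega) (by omega) (by omega)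
              omega
            · rw [if_neg (by rw [S'_iff_low a r (by omega) (by omega)]; omega),
                if_pos ((S'_iff_high a r (by omega) (by omega)).mpr hr2)]
              have e1 := Bhi_even a r e hpar (by omega) (by omega) (by omega)
              have e2 := Blo_even a (2*a+2+r) e hpar (by omega) (by omega) (by omega)
              omega
          rw [mysum_dec _ _ _ key]
          ring
        · -- e odd: increasing
          have key : ∀ r ∈ Finset.Ioc 0 (2*a+2),
              (G (4*a+6) r (4*a+7-e) + G (4*a+6) (2*a+2+r) (4*a+7-e))
                = (16*a^2+46*a+34) + 2*r := by
            intro r hr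
            rw [Finset.mem_Ioc] at hr
            unfold G
            rw [show (4:ℕ)*a+6+1-(4*a+7-e) = e by omega]
            rcases Nat.mod_two_eq_zero_or_one r with hr2 | hr2
            · rw [if_pos ((S'_iff_low a r (by omega) (by omega)).mpr hr2),
                if_neg (by rw [S'_iff_high a r (by omega) (by omega)]; omega)]
              have e1 := Blo_odd a r e hpar (by omega)
              have e2 := Bhi_odd a (2*a+2+r) e hpar (by omega)
              omega
            · rw [if_neg (by rw [S'_iff_low a r (by omega) (by omega)]; omega),
                if_pos ((S'_iff_high a r (by omega) (by omega)).mpr hr2)]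
              have e1 := Bhi_odd a r e hpar (by omega)
              have e2 := Blo_odd a (2*a+2+r) e hpar (by omega)
              omega
          rw [mysum_inc _ _ _ key]
          ring
end
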